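/- Let A be a finite subset of F_p and let a, b ∈ A with aA ∩ bA nonempty. Then |aA - bA| ≤ |A + A|² / |aA ∩ bA|. -/
import Mathlib

open Finset Pointwise

theorem diff_dilates_bound {p : ℕ} [Fact p.Prime]
    (A : Finset (ZMod p)) (a b : ZMod p) (ha : a ∈ A) (hb : b ∈ A)
    (hne : (a • A ∩ b • A).Nonempty) :
    ((a • A - b • A).card : ℝ) ≤ (A + A).card ^ 2 / (a • A ∩ b • A).card := by
  set X := a • A ∩ b • A with hX
  have hXpos : (0:ℝ) < X.card := by exact_mod_cast Finset.card_pos.2 hne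
  rw [le_div_iff₀ hXpos]
  have h1 : (a • A) + X ⊆ a • (A + A) := by
    intro z hz
    obtain ⟨u, hu, v, hv, rfl⟩ := Finset.mem_add.1 hz
    obtain ⟨x, hx, rfl⟩ := Finset.mem_smul_finset.1 hu
    obtain ⟨y, hy, rfl⟩ := Finset.mem_smul_finset.1 (Finset.mem_of_mem_inter_left hv)
    exact Finset.mem_smul_finset.2 ⟨x + y, Finset.add_mem_add hx hy, smul_add a x y⟩
  have h2 : (b • A) + X ⊆ b • (A + A) := by
    intro z hz
    obtain ⟨u, hu, v, hv, rfl⟩ := Finset.mem_add.1 hz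
    obtain ⟨x, hx, rfl⟩ := Finset.mem_smul_finset.1 hu
    obtain ⟨y, hy, rfl⟩ := Finset.mem_smul_finset.1 (Finset.mem_of_mem_inter_right hv)
    exact Finset.mem_smul_finset.2 ⟨x + y, Finset.add_mem_add hx hy, smul_add b x y⟩
  have c1 : ((a • A) + X).card ≤ (A + A).card :=
    (Finset.card_le_card h1).trans (by rw [Finset.smul_finset_def]; exact Finset.card_image_le)
  have c2 : ((b • A) + X).card ≤ (A + A).card :=
    (Finset.card_le_card h2).trans (by rw [Finset.smul_finset_def]; exact Finset.card_image_le)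
  have key : (a • A - b • A).card * X.card ≤ (A + A).card ^ 2 := by
    calc (a • A - b • A).card * X.card
        ≤ ((a • A) + X).card * ((b • A) + X).card :=
          ruzsa_triangle_inequality_sub_add_add _ _ _
      _ ≤ (A + A).card * (A + A).card := Nat.mul_le_mul c1 c2
      _ = (A + A).card ^ 2 := (sq _).symm
  exact_mod_cast key
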